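/- Let σ(x) = 1/(1 + exp(−x)) be the sigmoid function and let l < u be real numbers. If σ(u)·(1 − σ(u)) ≥ (σ(u) − σ(l))/(u − l), i.e. the derivative of σ at u is at least the slope of the chord through (l, σ(l)) and (u, σ(u)), then for every x ∈ [l, u], σ(x) ≤ φ_{l,u}(x), where φ_{l,u}(x) = σ(l) + ((σ(u) − σ(l))/(u − l))·(x − l) is the chord function. -/

import Mathlib

noncomputable def sigAux (x : ℝ) : ℝ := 1 / (1 + Real.exp (-x))
noncomputable def sigAux' (x : ℝ) : ℝ := sigAux x * (1 - sigAux x)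

lemma sigAux_denom_pos (x : ℝ) : 0 < 1 + Real.exp (-x) := by
  positivity

lemma sigAux_hasDerivAt (x : ℝ) : HasDerivAt sigAux (sigAux' x) x := by
  have h1 : HasDerivAt (fun y : ℝ => -y) (-1) x := (hasDerivAt_id x).neg
  have h2 : HasDerivAt (fun y : ℝ => Real.exp (-y)) (Real.exp (-x) * (-1)) x :=
    (Real.hasDerivAt_exp (-x)).comp x h1
  have h3 : HasDerivAt (fun y : ℝ => 1 + Real.exp (-y)) (Real.exp (-x) * (-1)) x :=
    h2.const_add 1
  have hne : 1 + Real.exp (-x) ≠ 0 := (sigAux_denom_pos x).ne'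
  have h4 := h3.inv hne
  have : HasDerivAt (fun y : ℝ => (1 + Real.exp (-y))⁻¹)
      (-(Real.exp (-x) * (-1)) / (1 + Real.exp (-x)) ^ 2) x := h4
  have heq : sigAux = fun y : ℝ => (1 + Real.exp (-y))⁻¹ := by
    funext y; simp [sigAux, one_div]
  rw [heq]
  convert this using 1
  have : sigAux' x = Real.exp (-x) / (1 + Real.exp (-x)) ^ 2 := by
    unfold sigAux' sigAux
    field_simp
    ring
  rw [this]; ring

lemma sigAux_continuous : Continuous sigAux := by
  unfold sigAux
  exact continuous_const.div (by continuity) (fun x => (sigAux_denom_pos x).ne')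

lemma sigAux'_continuous : Continuous sigAux' := by
  unfold sigAux'
  exact sigAux_continuous.mul (continuous_const.sub sigAux_continuous)

lemma sigAux_mono : Monotone sigAux := by
  intro a b hab
  unfold sigAux
  have h1 : Real.exp (-b) ≤ Real.exp (-a) := Real.exp_le_exp.2 (by linarith)
  exact one_div_le_one_div_of_le (sigAux_denom_pos b) (by linarith)

/-- quasiconcavity of σ' -/
lemma sigAux'_quasi {a x b : ℝ} (h1 : a ≤ x) (h2 : x ≤ b) :
    min (sigAux' a) (sigAux' b) ≤ sigAux' x := by
  have hpa := sigAux_mono h1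
  have hqb := sigAux_mono h2
  set p := sigAux a
  set t := sigAux x
  set q := sigAux b
  rcases le_or_gt (t + p) 1 with h | h
  · have : sigAux' a ≤ sigAux' x := by
      unfold sigAux'; nlinarith
    exact le_trans (min_le_left _ _) this
  · have : sigAux' b ≤ sigAux' x := by
      unfold sigAux'; nlinarith
    exact le_trans (min_le_right _ _) this

/-- Case 1 of the concave upper bound on the sigmoid: if the derivative of the sigmoid `σ`
at `u` is at least the slope of the chord through `(l, σ l)` and `(u, σ u)`, then the chord
upper-bounds `σ` on `[l, u]`. -/
theorem sigmoid_chord_upper_bound (l u : ℝ) (hlu : l < u)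
    (hslope :
      (1 / (1 + Real.exp (-u))) * (1 - 1 / (1 + Real.exp (-u)))
        ≥ (1 / (1 + Real.exp (-u)) - 1 / (1 + Real.exp (-l))) / (u - l)) :
    ∀ x ∈ Set.Icc l u,
      1 / (1 + Real.exp (-x))
        ≤ 1 / (1 + Real.exp (-l))
          + ((1 / (1 + Real.exp (-u)) - 1 / (1 + Real.exp (-l))) / (u - l)) * (x - l) := by
  set s : ℝ := (sigAux u - sigAux l) / (u - l) with hs
  have hslope' : s ≤ sigAux' u := hslope
  set g : ℝ → ℝ := fun x => sigAux l + s * (x - l) - sigAux x with hg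
  -- derivative of g
  have hgd : ∀ x, HasDerivAt g (s - sigAux' x) x := by
    intro x
    have h1 : HasDerivAt (fun y : ℝ => sigAux l + s * (y - l)) s x := by
      have : HasDerivAt (fun y : ℝ => y - l) 1 x := (hasDerivAt_id x).sub_const l
      simpa using ((this.const_mul s).const_add (sigAux l))
    exact h1.sub (sigAux_hasDerivAt x)
  have hgcont : Continuous g := by
    have := sigAux_continuous
    fun_prop
  -- the set S and c
  set S : Set ℝ := Set.Icc l u ∩ {x | s ≤ sigAux' x} with hS
  have hSclosed : IsClosed S :=
    isClosed_Icc.inter (isClosed_le continuous_const sigAux'_continuous)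
  have hune : u ∈ S := ⟨⟨le_of_lt hlu, le_refl u⟩, hslope'⟩
  have hSne : S.Nonempty := ⟨u, hune⟩
  have hSbdd : BddBelow S := ⟨l, fun x hx => hx.1.1⟩
  set c : ℝ := sInf S with hc
  have hcS : c ∈ S := hSclosed.csInf_mem hSne hSbdd
  have hlc : l ≤ c := hcS.1.1
  have hcu : c ≤ u := hcS.1.2
  have hcds : s ≤ sigAux' c := hcS.2
  -- g antitone on [c, u]
  have hanti : AntitoneOn g (Set.Icc c u) := by
    apply antitoneOn_of_deriv_nonpos (convex_Icc c u) hgcont.continuousOn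
    · intro x _; exact (hgd x).differentiableAt.differentiableWithinAt
    · intro x hx
      rw [interior_Icc] at hx
      rw [(hgd x).deriv]
      have := sigAux'_quasi (le_of_lt hx.1) (le_of_lt hx.2)
      have : s ≤ sigAux' x := le_trans (le_min hcds hslope') this
      linarith
  -- g monotone on [l, c]
  have hmono : MonotoneOn g (Set.Icc l c) := by
    apply monotoneOn_of_deriv_nonneg (convex_Icc l c) hgcont.continuousOn
    · intro x _; exact (hgd x).differentiableAt.differentiableWithinAt
    · intro x hx
      rw [interior_Icc] at hx
      rw [(hgd x).deriv]
      have hxnS : x ∉ S := fun hxS => absurd (csInf_le hSbdd hxS) (not_le.2 hx.2)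
      have : ¬ s ≤ sigAux' x := fun h => hxnS ⟨⟨le_of_lt hx.1, le_trans (le_of_lt hx.2) hcu⟩, h⟩
      linarith [not_le.1 this]
  have hgl : g l = 0 := by simp [hg]
  have hgu : g u = 0 := by
    have : s * (u - l) = sigAux u - sigAux l := by
      rw [hs, div_mul_cancel₀ _ (sub_ne_zero.2 hlu.ne')]
    simp [hg, this]
  intro x hx
  have key : 0 ≤ g x := by
    rcases le_or_gt x c with h | h
    · have := hmono ⟨le_refl l, hlc⟩ ⟨hx.1, h⟩ hx.1
      rw [hgl] at this; exact this
    · have := hanti ⟨le_of_lt h, hx.2⟩ ⟨hcu, le_refl u⟩ hx.2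
      rw [hgu] at this; exact this
  have : sigAux x ≤ sigAux l + s * (x - l) := by
    simpa [hg, sub_nonneg] using key
  simpa [sigAux, hs] using this
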